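/- Completeness of the trace-based Hoare logic: for any While statement s, state predicate U and setoid trace predicate P, if for all states σ and traces τ, U σ and (s,σ) ⇒ τ imply that τ satisfies P, then ⊢{U} s {P} is derivable. -/

import Mathlib

namespace WhileTrace

/-- Program variables. -/
abbrev Var := ℕ
/-- States assign integer values to variables. -/
abbrev State := Var → ℤ
/-- Arithmetic expressions, modelled by their integer value in each state. -/
abbrev Expr := State → ℤ

/-- State update `σ[x ↦ v]`. -/
def update (σ : State) (x : Var) (v : ℤ) : State := Function.update σ x v

/-- Reading an expression as a boolean: `σ ⊨ e`. -/
def istrue (e : Expr) (σ : State) : Prop := e σ ≠ 0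

/-- Traces: nonempty, possibly infinite sequences of states
(a head state together with a possibly infinite sequence of further states). -/
def Trace : Type := State × Stream'.Seq State

/-- The singleton trace `⟨σ⟩`. -/
def Trace.single (σ : State) : Trace := (σ, Stream'.Seq.nil)

/-- The cons trace `σ :: τ`. -/
def Trace.cons (σ : State) (τ : Trace) : Trace := (σ, Stream'.Seq.cons τ.1 τ.2)

/-- The first state of a trace. -/
def Trace.hd (τ : Trace) : State := τ.1

/-- Bisimilarity of traces `τ ≈ τ'`, as a greatest fixed point:
there is a relation `R` relating the two traces that is consistent with the
coinductive rules `⟨σ⟩ ≈ ⟨σ⟩` and `σ::τ ≈ σ::τ'` whenever `τ ≈ τ'`. -/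
def Bisim (τ τ' : Trace) : Prop :=
  ∃ R : Trace → Trace → Prop, R τ τ' ∧
    ∀ a b, R a b →
      (∃ σ, a = Trace.single σ ∧ b = Trace.single σ) ∨
      (∃ σ a' b', a = Trace.cons σ a' ∧ b = Trace.cons σ b' ∧ R a' b')

/-- Finiteness `τ ↓ σ` : `τ` is finite with last state `σ` (inductive). -/
inductive Converges : Trace → State → Prop
  | single (σ : State) : Converges (Trace.single σ) σ
  | cons (σ' : State) {τ : Trace} {σ : State} :
      Converges τ σ → Converges (Trace.cons σ' τ) σ

/-- Infiniteness of a trace (coinductive, as a greatest fixed point). -/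
def InfiniteT (τ : Trace) : Prop :=
  ∃ P : Trace → Prop, P τ ∧ ∀ a, P a → ∃ σ a', a = Trace.cons σ a' ∧ P a'

/-- Statements of the While language. -/
inductive Stmt : Type
  | assign (x : Var) (e : Expr)
  | skip
  | seq (s₀ s₁ : Stmt)
  | ifte (e : Expr) (st sf : Stmt)
  | whileDo (e : Expr) (st : Stmt)

/-- A pair of relations `(E, ES)` is consistent with the rules of evaluation
and extended evaluation: every claimed evaluation is backed by one of the
coinductive rules, with premises again in `(E, ES)`. -/
def EvalConsistent (E : Stmt → State → Trace → Prop)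
    (ES : Stmt → Trace → Trace → Prop) : Prop :=
  (∀ x e σ τ, E (.assign x e) σ τ →
      τ = Trace.cons σ (Trace.single (update σ x (e σ)))) ∧
  (∀ σ τ, E .skip σ τ → τ = Trace.single σ) ∧
  (∀ s₀ s₁ σ τ', E (.seq s₀ s₁) σ τ' → ∃ τ, E s₀ σ τ ∧ ES s₁ τ τ') ∧
  (∀ e st sf σ τ, E (.ifte e st sf) σ τ →
      (istrue e σ ∧ ES st (Trace.cons σ (Trace.single σ)) τ) ∨
      (¬ istrue e σ ∧ ES sf (Trace.cons σ (Trace.single σ)) τ)) ∧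
  (∀ e st σ τ', E (.whileDo e st) σ τ' →
      (istrue e σ ∧ ∃ τ, ES st (Trace.cons σ (Trace.single σ)) τ ∧
        ES (.whileDo e st) τ τ') ∨
      (¬ istrue e σ ∧ τ' = Trace.cons σ (Trace.single σ))) ∧
  (∀ s τ τ', ES s τ τ' →
      (∃ σ, τ = Trace.single σ ∧ E s σ τ') ∨
      (∃ σ τ₀ τ₀', τ = Trace.cons σ τ₀ ∧ τ' = Trace.cons σ τ₀' ∧ ES s τ₀ τ₀'))

/-- Evaluation `(s,σ) ⇒ τ` : greatest fixed point of the mutual coinductive rules. -/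
def Exec (s : Stmt) (σ : State) (τ : Trace) : Prop :=
  ∃ E ES, EvalConsistent E ES ∧ E s σ τ

/-- Extended evaluation `(s,τ) ⇒* τ'`. -/
def ExecSeq (s : Stmt) (τ τ' : Trace) : Prop :=
  ∃ E ES, EvalConsistent E ES ∧ ES s τ τ'

/-- The standard inductive state-based big-step semantics `(s,σ) ⇓ σ'`. -/
inductive BigStep : Stmt → State → State → Prop
  | assign (x : Var) (e : Expr) (σ : State) :
      BigStep (.assign x e) σ (update σ x (e σ))
  | skip (σ : State) : BigStep .skip σ σ
  | seq {s₀ s₁ : Stmt} {σ σ' σ'' : State} :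
      BigStep s₀ σ σ' → BigStep s₁ σ' σ'' → BigStep (.seq s₀ s₁) σ σ''
  | ifTrue {e : Expr} {st sf : Stmt} {σ σ' : State} :
      istrue e σ → BigStep st σ σ' → BigStep (.ifte e st sf) σ σ'
  | ifFalse {e : Expr} {st sf : Stmt} {σ σ' : State} :
      ¬ istrue e σ → BigStep sf σ σ' → BigStep (.ifte e st sf) σ σ'
  | whileTrue {e : Expr} {st : Stmt} {σ σ' σ'' : State} :
      istrue e σ → BigStep st σ σ' → BigStep (.whileDo e st) σ' σ'' →
      BigStep (.whileDo e st) σ σ''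
  | whileFalse {e : Expr} {st : Stmt} {σ : State} :
      ¬ istrue e σ → BigStep (.whileDo e st) σ σ

/-- State predicates. -/
abbrev StatePred := State → Prop
/-- Trace predicates. -/
abbrev TracePred := Trace → Prop

/-- A setoid trace predicate respects bisimilarity. -/
def IsSetoidPred (P : TracePred) : Prop := ∀ τ τ', P τ → Bisim τ τ' → P τ'

/-- The singleton predicate `[U]`. -/
def Sglt (U : StatePred) : TracePred :=
  fun τ => ∃ σ, U σ ∧ τ = Trace.single σ

/-- The doubleton predicate `⟨U⟩`. -/
def Dup (U : StatePred) : TracePred :=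
  fun τ => ∃ σ, U σ ∧ τ = Trace.cons σ (Trace.single σ)

/-- The update predicate `U[x ↦ e]`. -/
def UpdPred (U : StatePred) (x : Var) (e : Expr) : TracePred :=
  fun τ => ∃ σ, U σ ∧ τ = Trace.cons σ (Trace.single (update σ x (e σ)))

/-- `Q follows τ in τ'` (coinductive, as a greatest fixed point). -/
def Follows (Q : TracePred) (τ τ' : Trace) : Prop :=
  ∃ R : Trace → Trace → Prop, R τ τ' ∧
    ∀ a b, R a b →
      (∃ σ, a = Trace.single σ ∧ b.hd = σ ∧ Q b) ∨
      (∃ σ a' b', a = Trace.cons σ a' ∧ b = Trace.cons σ b' ∧ R a' b')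

/-- The chop `P ** Q`. -/
def Chop (P Q : TracePred) : TracePred :=
  fun τ' => ∃ τ, P τ ∧ Follows Q τ τ'

/-- The iteration `P*` (coinductive, as a greatest fixed point). -/
def Iter (P : TracePred) : TracePred := fun τ =>
  ∃ X : TracePred, X τ ∧
    ∀ a, X a → Sglt (fun _ => True) a ∨ ∃ τ₀, P τ₀ ∧ Follows X τ₀ a

/-- `Last P` : states that are the last state of some finite trace satisfying `P`. -/
def Last (P : TracePred) : StatePred := fun σ => ∃ τ, P τ ∧ Converges τ σ

/-- The trace predicate `finite`. -/
def FiniteT : TracePred := fun τ => ∃ σ, Converges τ σ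

/-- Derivability `⊢ {U} s {P}` in the trace-based Hoare logic. -/
inductive THoare : StatePred → Stmt → TracePred → Prop
  | assign (U : StatePred) (x : Var) (e : Expr) :
      THoare U (.assign x e) (UpdPred U x e)
  | skip (U : StatePred) : THoare U .skip (Sglt U)
  | seq {U V : StatePred} {s₀ s₁ : Stmt} {P Q : TracePred} :
      THoare U s₀ (Chop P (Sglt V)) → THoare V s₁ Q →
      THoare U (.seq s₀ s₁) (Chop P Q)
  | ifte {U : StatePred} {e : Expr} {st sf : Stmt} {P : TracePred} :
      THoare (fun σ => istrue e σ ∧ U σ) st P →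
      THoare (fun σ => ¬ istrue e σ ∧ U σ) sf P →
      THoare U (.ifte e st sf) (Chop (Dup U) P)
  | whileDo {U I : StatePred} {e : Expr} {st : Stmt} {P : TracePred} :
      (∀ σ, U σ → I σ) →
      THoare (fun σ => istrue e σ ∧ I σ) st (Chop P (Sglt I)) →
      THoare U (.whileDo e st)
        (Chop (Dup U)
          (Chop (Iter (Chop P (Dup I))) (Sglt (fun σ => ¬ istrue e σ))))
  | conseq {U U' : StatePred} {s : Stmt} {P P' : TracePred} :
      (∀ σ, U σ → U' σ) → THoare U' s P' → (∀ τ, P' τ → P τ) →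
      THoare U s P
  | exist {Z : Type} {U : Z → StatePred} {s : Stmt} {P : Z → TracePred} :
      (∀ z, THoare (U z) s (P z)) →
      THoare (fun σ => ∃ z, U z σ) s (fun τ => ∃ z, P z τ)

/-- Derivability `⊢p {U} s {Z}` in the state-based partial-correctness Hoare logic. -/
inductive PHoare : StatePred → Stmt → StatePred → Prop
  | assign (Z : StatePred) (x : Var) (e : Expr) :
      PHoare (fun σ => Z (update σ x (e σ))) (.assign x e) Z
  | skip (U : StatePred) : PHoare U .skip U
  | seq {U V Z : StatePred} {s₀ s₁ : Stmt} :
      PHoare U s₀ V → PHoare V s₁ Z → PHoare U (.seq s₀ s₁) Z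
  | ifte {U Z : StatePred} {e : Expr} {st sf : Stmt} :
      PHoare (fun σ => istrue e σ ∧ U σ) st Z →
      PHoare (fun σ => ¬ istrue e σ ∧ U σ) sf Z →
      PHoare U (.ifte e st sf) Z
  | whileDo {I : StatePred} {e : Expr} {st : Stmt} :
      PHoare (fun σ => istrue e σ ∧ I σ) st I →
      PHoare I (.whileDo e st) (fun σ => I σ ∧ ¬ istrue e σ)
  | exist {Z : Type} {U V : Z → StatePred} {s : Stmt} :
      (∀ z, PHoare (U z) s (V z)) →
      PHoare (fun σ => ∃ z, U z σ) s (fun σ => ∃ z, V z σ)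
  | conseq {U U' Z Z' : StatePred} {s : Stmt} :
      (∀ σ, U σ → U' σ) → PHoare U' s Z' → (∀ σ, Z' σ → Z σ) →
      PHoare U s Z

/-- Derivability `⊢t {U} s {Z}` in the state-based total-correctness Hoare
logic, with the `while-fun` rule. -/
inductive TotHoare : StatePred → Stmt → StatePred → Prop
  | assign (Z : StatePred) (x : Var) (e : Expr) :
      TotHoare (fun σ => Z (update σ x (e σ))) (.assign x e) Z
  | skip (U : StatePred) : TotHoare U .skip U
  | seq {U V Z : StatePred} {s₀ s₁ : Stmt} :
      TotHoare U s₀ V → TotHoare V s₁ Z → TotHoare U (.seq s₀ s₁) Z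
  | ifte {U Z : StatePred} {e : Expr} {st sf : Stmt} :
      TotHoare (fun σ => istrue e σ ∧ U σ) st Z →
      TotHoare (fun σ => ¬ istrue e σ ∧ U σ) sf Z →
      TotHoare U (.ifte e st sf) Z
  | whileFun {I : StatePred} {e : Expr} {st : Stmt} (t : State → ℕ) (m : ℕ) :
      (∀ n : ℕ, TotHoare (fun σ => istrue e σ ∧ I σ ∧ t σ = n) st
        (fun σ => I σ ∧ t σ < n)) →
      TotHoare (fun σ => I σ ∧ t σ = m) (.whileDo e st)
        (fun σ => I σ ∧ t σ ≤ m ∧ ¬ istrue e σ)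
  | exist {Z : Type} {U V : Z → StatePred} {s : Stmt} :
      (∀ z, TotHoare (U z) s (V z)) →
      TotHoare (fun σ => ∃ z, U z σ) s (fun σ => ∃ z, V z σ)
  | conseq {U U' Z Z' : StatePred} {s : Stmt} :
      (∀ σ, U σ → U' σ) → TotHoare U' s Z' → (∀ σ, Z' σ → Z σ) →
      TotHoare U s Z

/- ======== auxiliary development for completeness ======== -/

lemma Trace.single_inj {σ σ' : State} (h : Trace.single σ = Trace.single σ') : σ = σ' :=
  congrArg Prod.fst h

lemma Trace.cons_inj {σ σ' : State} {τ τ' : Trace}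
    (h : Trace.cons σ τ = Trace.cons σ' τ') : σ = σ' ∧ τ = τ' := by
  have h1 := congrArg Prod.fst h
  have h2 := congrArg Prod.snd h
  simp only [Trace.cons] at h1 h2
  obtain ⟨ha, hb⟩ := Stream'.Seq.cons_injective2 h2
  exact ⟨h1, Prod.ext ha hb⟩

lemma Trace.single_ne_cons {σ σ' : State} {τ : Trace} :
    Trace.single σ ≠ Trace.cons σ' τ := by
  intro h
  have h2 := congrArg Prod.snd h
  simp only [Trace.single, Trace.cons] at h2
  have := congrArg Stream'.Seq.head h2
  simp at this

@[simp] lemma Trace.hd_single (σ : State) : (Trace.single σ).hd = σ := rfl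
@[simp] lemma Trace.hd_cons (σ : State) (τ : Trace) : (Trace.cons σ τ).hd = σ := rfl

lemma trace_cases (τ : Trace) :
    (∃ σ, τ = Trace.single σ) ∨ ∃ σ τ', τ = Trace.cons σ τ' := by
  obtain ⟨σ, s⟩ := τ
  have : s = Stream'.Seq.nil ∨ ∃ a s', s = Stream'.Seq.cons a s' := by
    cases h : s.destruct with
    | none => exact Or.inl (Stream'.Seq.destruct_eq_none h)
    | some v =>
      exact Or.inr ⟨v.1, v.2, by have := Stream'.Seq.destruct_eq_cons h; simpa using this⟩
  rcases this with rfl | ⟨a, s', rfl⟩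
  · exact Or.inl ⟨σ, rfl⟩
  · exact Or.inr ⟨σ, (a, s'), rfl⟩

lemma evalConsistent_exec : EvalConsistent Exec ExecSeq := by
  refine ⟨?_, ?_, ?_, ?_, ?_, ?_⟩
  · rintro x e σ τ ⟨E, ES, hC, hE⟩; exact hC.1 x e σ τ hE
  · rintro σ τ ⟨E, ES, hC, hE⟩; exact hC.2.1 σ τ hE
  · rintro s₀ s₁ σ τ' ⟨E, ES, hC, hE⟩
    obtain ⟨τ, h1, h2⟩ := hC.2.2.1 s₀ s₁ σ τ' hE
    exact ⟨τ, ⟨E, ES, hC, h1⟩, ⟨E, ES, hC, h2⟩⟩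
  · rintro e st sf σ τ ⟨E, ES, hC, hE⟩
    rcases hC.2.2.2.1 e st sf σ τ hE with ⟨h1, h2⟩ | ⟨h1, h2⟩
    · exact Or.inl ⟨h1, E, ES, hC, h2⟩
    · exact Or.inr ⟨h1, E, ES, hC, h2⟩
  · rintro e st σ τ' ⟨E, ES, hC, hE⟩
    rcases hC.2.2.2.2.1 e st σ τ' hE with ⟨h1, τ, h2, h3⟩ | h
    · exact Or.inl ⟨h1, τ, ⟨E, ES, hC, h2⟩, ⟨E, ES, hC, h3⟩⟩
    · exact Or.inr h
  · rintro s τ τ' ⟨E, ES, hC, hE⟩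
    rcases hC.2.2.2.2.2 s τ τ' hE with ⟨σ, h1, h2⟩ | ⟨σ, τ₀, τ₀', h1, h2, h3⟩
    · exact Or.inl ⟨σ, h1, E, ES, hC, h2⟩
    · exact Or.inr ⟨σ, τ₀, τ₀', h1, h2, E, ES, hC, h3⟩

/-- One-step rule closure of `Exec`/`ExecSeq`. -/
inductive E1 : Stmt → State → Trace → Prop
  | assign (x : Var) (e : Expr) (σ : State) :
      E1 (.assign x e) σ (Trace.cons σ (Trace.single (update σ x (e σ))))
  | skip (σ : State) : E1 .skip σ (Trace.single σ)
  | seq {s₀ s₁ σ τ τ'} : Exec s₀ σ τ → ExecSeq s₁ τ τ' → E1 (.seq s₀ s₁) σ τ'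
  | ifT {e st sf σ τ} : istrue e σ →
      ExecSeq st (Trace.cons σ (Trace.single σ)) τ → E1 (.ifte e st sf) σ τ
  | ifF {e st sf σ τ} : ¬ istrue e σ →
      ExecSeq sf (Trace.cons σ (Trace.single σ)) τ → E1 (.ifte e st sf) σ τ
  | whT {e st σ τ τ'} : istrue e σ →
      ExecSeq st (Trace.cons σ (Trace.single σ)) τ →
      ExecSeq (.whileDo e st) τ τ' → E1 (.whileDo e st) σ τ'
  | whF {e st σ} : ¬ istrue e σ → E1 (.whileDo e st) σ (Trace.cons σ (Trace.single σ))

inductive ES1 : Stmt → Trace → Trace → Prop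
  | single {s σ τ} : Exec s σ τ → ES1 s (Trace.single σ) τ
  | cons (σ : State) {s τ τ'} : ExecSeq s τ τ' → ES1 s (Trace.cons σ τ) (Trace.cons σ τ')

lemma evalConsistent_union :
    EvalConsistent (fun s σ τ => Exec s σ τ ∨ E1 s σ τ)
      (fun s τ τ' => ExecSeq s τ τ' ∨ ES1 s τ τ') := by
  have hC := evalConsistent_exec
  refine ⟨?_, ?_, ?_, ?_, ?_, ?_⟩
  · rintro x e σ τ (h | h)
    · exact hC.1 x e σ τ h
    · cases h; rfl
  · rintro σ τ (h | h)
    · exact hC.2.1 σ τ h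
    · cases h; rfl
  · rintro s₀ s₁ σ τ' (h | h)
    · obtain ⟨τ, h1, h2⟩ := hC.2.2.1 s₀ s₁ σ τ' h
      exact ⟨τ, Or.inl h1, Or.inl h2⟩
    · cases h with | seq h1 h2 => exact ⟨_, Or.inl h1, Or.inl h2⟩
  · rintro e st sf σ τ (h | h)
    · rcases hC.2.2.2.1 e st sf σ τ h with ⟨h1, h2⟩ | ⟨h1, h2⟩
      · exact Or.inl ⟨h1, Or.inl h2⟩
      · exact Or.inr ⟨h1, Or.inl h2⟩
    · cases h with
      | ifT h1 h2 => exact Or.inl ⟨h1, Or.inl h2⟩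
      | ifF h1 h2 => exact Or.inr ⟨h1, Or.inl h2⟩
  · rintro e st σ τ' (h | h)
    · rcases hC.2.2.2.2.1 e st σ τ' h with ⟨h1, τ, h2, h3⟩ | h1
      · exact Or.inl ⟨h1, τ, Or.inl h2, Or.inl h3⟩
      · exact Or.inr h1
    · cases h with
      | whT h1 h2 h3 => exact Or.inl ⟨h1, _, Or.inl h2, Or.inl h3⟩
      | whF h1 => exact Or.inr ⟨h1, rfl⟩
  · rintro s τ τ' (h | h)
    · rcases hC.2.2.2.2.2 s τ τ' h with ⟨σ, h1, h2⟩ | ⟨σ, τ₀, τ₀', h1, h2, h3⟩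
      · exact Or.inl ⟨σ, h1, Or.inl h2⟩
      · exact Or.inr ⟨σ, τ₀, τ₀', h1, h2, Or.inl h3⟩
    · cases h with
      | single h1 => exact Or.inl ⟨_, rfl, Or.inl h1⟩
      | cons σ h1 => exact Or.inr ⟨σ, _, _, rfl, rfl, Or.inl h1⟩

lemma Exec.ofE1 {s σ τ} (h : E1 s σ τ) : Exec s σ τ :=
  ⟨_, _, evalConsistent_union, Or.inr h⟩

lemma ExecSeq.ofES1 {s τ τ'} (h : ES1 s τ τ') : ExecSeq s τ τ' :=
  ⟨_, _, evalConsistent_union, Or.inr h⟩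

lemma exec_seq_elim {s₀ s₁ σ τ'} (h : Exec (.seq s₀ s₁) σ τ') :
    ∃ τ, Exec s₀ σ τ ∧ ExecSeq s₁ τ τ' := evalConsistent_exec.2.2.1 _ _ _ _ h

lemma exec_ifte_elim {e st sf σ τ} (h : Exec (.ifte e st sf) σ τ) :
    (istrue e σ ∧ ExecSeq st (Trace.cons σ (Trace.single σ)) τ) ∨
    (¬ istrue e σ ∧ ExecSeq sf (Trace.cons σ (Trace.single σ)) τ) :=
  evalConsistent_exec.2.2.2.1 _ _ _ _ _ h

lemma exec_while_elim {e st σ τ'} (h : Exec (.whileDo e st) σ τ') :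
    (istrue e σ ∧ ∃ τ, ExecSeq st (Trace.cons σ (Trace.single σ)) τ ∧
      ExecSeq (.whileDo e st) τ τ') ∨
    (¬ istrue e σ ∧ τ' = Trace.cons σ (Trace.single σ)) :=
  evalConsistent_exec.2.2.2.2.1 _ _ _ _ h

lemma execSeq_elim {s τ τ'} (h : ExecSeq s τ τ') :
    (∃ σ, τ = Trace.single σ ∧ Exec s σ τ') ∨
    (∃ σ τ₀ τ₀', τ = Trace.cons σ τ₀ ∧ τ' = Trace.cons σ τ₀' ∧ ExecSeq s τ₀ τ₀') :=
  evalConsistent_exec.2.2.2.2.2 _ _ _ h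

lemma execSeq_single_elim {s σ τ'} (h : ExecSeq s (Trace.single σ) τ') : Exec s σ τ' := by
  rcases execSeq_elim h with ⟨σ', h1, h2⟩ | ⟨σ', τ₀, τ₀', h1, _, _⟩
  · cases Trace.single_inj h1; exact h2
  · exact absurd h1 Trace.single_ne_cons

lemma execSeq_cons_elim {s σ τ₀ τ'} (h : ExecSeq s (Trace.cons σ τ₀) τ') :
    ∃ τ₀', τ' = Trace.cons σ τ₀' ∧ ExecSeq s τ₀ τ₀' := by
  rcases execSeq_elim h with ⟨σ', h1, _⟩ | ⟨σ', τa, τb, h1, h2, h3⟩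
  · exact absurd h1.symm Trace.single_ne_cons
  · obtain ⟨rfl, rfl⟩ := Trace.cons_inj h1
    exact ⟨τb, h2, h3⟩

lemma exec_hd : ∀ (s : Stmt) {σ : State} {τ : Trace}, Exec s σ τ → τ.hd = σ := by
  intro s
  induction s with
  | assign x e =>
    intro σ τ h
    rw [evalConsistent_exec.1 x e σ τ h]; rfl
  | skip =>
    intro σ τ h
    rw [evalConsistent_exec.2.1 σ τ h]; rfl
  | seq s₀ s₁ ih₀ ih₁ =>
    intro σ τ' h
    obtain ⟨τ, h1, h2⟩ := exec_seq_elim h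
    have hh := ih₀ h1
    rcases trace_cases τ with ⟨σ', rfl⟩ | ⟨σ', τ₀, rfl⟩
    · simp only [Trace.hd_single] at hh
      subst hh
      exact ih₁ (execSeq_single_elim h2)
    · simp only [Trace.hd_cons] at hh
      subst hh
      obtain ⟨τ₀', rfl, _⟩ := execSeq_cons_elim h2
      rfl
  | ifte e st sf iht ihf =>
    intro σ τ h
    rcases exec_ifte_elim h with ⟨_, h2⟩ | ⟨_, h2⟩ <;>
    · obtain ⟨τ₀', rfl, _⟩ := execSeq_cons_elim h2; rfl
  | whileDo e st ih =>
    intro σ τ' h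
    rcases exec_while_elim h with ⟨_, τ, h2, h3⟩ | ⟨_, rfl⟩
    · obtain ⟨τ₀', rfl, _⟩ := execSeq_cons_elim h2
      obtain ⟨τ₁', rfl, _⟩ := execSeq_cons_elim h3
      rfl
    · rfl

/- ======== Follows lemmas ======== -/

lemma follows_single_elim {Q : TracePred} {τ' : Trace} {σ : State}
    (h : Follows Q (Trace.single σ) τ') : τ'.hd = σ ∧ Q τ' := by
  obtain ⟨R, hR, hstep⟩ := h
  rcases hstep _ _ hR with ⟨σ', h1, h2, h3⟩ | ⟨σ', a', b', h1, _, _⟩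
  · cases Trace.single_inj h1; exact ⟨h2, h3⟩
  · exact absurd h1 Trace.single_ne_cons

lemma follows_cons_elim {Q : TracePred} {τ τ' : Trace} {σ : State}
    (h : Follows Q (Trace.cons σ τ) τ') :
    ∃ τ₀', τ' = Trace.cons σ τ₀' ∧ Follows Q τ τ₀' := by
  obtain ⟨R, hR, hstep⟩ := h
  rcases hstep _ _ hR with ⟨σ', h1, _, _⟩ | ⟨σ', a', b', h1, h2, h3⟩
  · exact absurd h1.symm Trace.single_ne_cons
  · obtain ⟨rfl, rfl⟩ := Trace.cons_inj h1
    exact ⟨b', h2, R, h3, hstep⟩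

lemma follows_hd {Q : TracePred} {τ τ' : Trace} (h : Follows Q τ τ') : τ'.hd = τ.hd := by
  rcases trace_cases τ with ⟨σ, rfl⟩ | ⟨σ, τ₀, rfl⟩
  · exact (follows_single_elim h).1
  · obtain ⟨τ₀', rfl, _⟩ := follows_cons_elim h; rfl

lemma follows_single_intro {Q : TracePred} {σ : State} {τ' : Trace}
    (h1 : τ'.hd = σ) (h2 : Q τ') : Follows Q (Trace.single σ) τ' :=
  ⟨fun a b => a = Trace.single b.hd ∧ Q b, ⟨by rw [h1], h2⟩,
   fun a b hab => Or.inl ⟨b.hd, hab.1, rfl, hab.2⟩⟩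

lemma follows_cons_intro {Q : TracePred} {σ : State} {τ τ' : Trace}
    (h : Follows Q τ τ') : Follows Q (Trace.cons σ τ) (Trace.cons σ τ') := by
  obtain ⟨R, hR, hstep⟩ := h
  refine ⟨fun a b => R a b ∨ (a = Trace.cons σ τ ∧ b = Trace.cons σ τ'),
    Or.inr ⟨rfl, rfl⟩, ?_⟩
  rintro a b (hab | ⟨rfl, rfl⟩)
  · rcases hstep a b hab with h | ⟨σ', a', b', h1, h2, h3⟩
    · exact Or.inl h
    · exact Or.inr ⟨σ', a', b', h1, h2, Or.inl h3⟩
  · exact Or.inr ⟨σ, τ, τ', rfl, rfl, Or.inl hR⟩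

lemma follows_mono {Q Q' : TracePred} (hQQ : ∀ τ, Q τ → Q' τ) {τ τ' : Trace}
    (h : Follows Q τ τ') : Follows Q' τ τ' := by
  obtain ⟨R, hR, hstep⟩ := h
  refine ⟨R, hR, fun a b hab => ?_⟩
  rcases hstep a b hab with ⟨σ, h1, h2, h3⟩ | h
  · exact Or.inl ⟨σ, h1, h2, hQQ _ h3⟩
  · exact Or.inr h

lemma iter_elim {P : TracePred} {τ : Trace} (h : Iter P τ) :
    (∃ σ, τ = Trace.single σ) ∨ ∃ τ₀, P τ₀ ∧ Follows (Iter P) τ₀ τ := by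
  obtain ⟨X, hX, hstep⟩ := h
  rcases hstep _ hX with ⟨σ, _, h1⟩ | ⟨τ₀, h1, h2⟩
  · exact Or.inl ⟨σ, h1⟩
  · exact Or.inr ⟨τ₀, h1, follows_mono (fun a ha => ⟨X, ha, hstep⟩) h2⟩

lemma chop_extend {P : TracePred} {V : StatePred}
    (hV : ∀ τ σ, P τ → Converges τ σ → V σ) {τ : Trace} (hP : P τ) :
    Chop P (Sglt V) τ := by
  refine ⟨τ, hP, fun a b => a = b ∧ ∀ σ, Converges a σ → V σ,
    ⟨rfl, fun σ hc => hV τ σ hP hc⟩, ?_⟩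
  rintro a b ⟨rfl, hc⟩
  rcases trace_cases a with ⟨σ, rfl⟩ | ⟨σ, a', rfl⟩
  · exact Or.inl ⟨σ, rfl, rfl, σ, hc σ (Converges.single σ), rfl⟩
  · exact Or.inr ⟨σ, a', a', rfl, rfl, rfl, fun σ' h' => hc σ' (Converges.cons σ h')⟩

lemma follows_execSeq {Q : TracePred} {s : Stmt}
    (hQ : ∀ b, Q b → Exec s b.hd b) : ∀ {τ τ' : Trace}, Follows Q τ τ' → ExecSeq s τ τ' := by
  intro τ τ' h
  refine ⟨Exec, fun s' a b => ExecSeq s' a b ∨ (s' = s ∧ Follows Q a b), ?_, Or.inr ⟨rfl, h⟩⟩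
  have hC := evalConsistent_exec
  refine ⟨hC.1, hC.2.1, ?_, ?_, ?_, ?_⟩
  · intro s₀ s₁ σ τ₀ hE
    obtain ⟨τ₁, h1, h2⟩ := hC.2.2.1 _ _ _ _ hE
    exact ⟨τ₁, h1, Or.inl h2⟩
  · intro e st sf σ τ₀ hE
    rcases hC.2.2.2.1 _ _ _ _ _ hE with ⟨h1, h2⟩ | ⟨h1, h2⟩
    exacts [Or.inl ⟨h1, Or.inl h2⟩, Or.inr ⟨h1, Or.inl h2⟩]
  · intro e st σ τ₀ hE
    rcases hC.2.2.2.2.1 _ _ _ _ hE with ⟨h1, τ₁, h2, h3⟩ | h1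
    exacts [Or.inl ⟨h1, τ₁, Or.inl h2, Or.inl h3⟩, Or.inr h1]
  · rintro s' a b (hE | ⟨rfl, hF⟩)
    · rcases hC.2.2.2.2.2 _ _ _ hE with ⟨σ, h1, h2⟩ | ⟨σ, t0, t1, h1, h2, h3⟩
      exacts [Or.inl ⟨σ, h1, h2⟩, Or.inr ⟨σ, t0, t1, h1, h2, Or.inl h3⟩]
    · rcases trace_cases a with ⟨σ, rfl⟩ | ⟨σ, a', rfl⟩
      · obtain ⟨hhd, hQb⟩ := follows_single_elim hF
        exact Or.inl ⟨σ, rfl, hhd ▸ hQ b hQb⟩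
      · obtain ⟨b', rfl, hF'⟩ := follows_cons_elim hF
        exact Or.inr ⟨σ, a', b', rfl, rfl, Or.inr ⟨rfl, hF'⟩⟩

/- ======== while case ======== -/

/-- States reachable from a `U`-state by finitely many completed iterations. -/
inductive Reach (U : StatePred) (e : Expr) (st : Stmt) : State → Prop
  | base {σ} : U σ → Reach U e st σ
  | step {σ τ σ'} : Reach U e st σ → istrue e σ → Exec st σ τ → Converges τ σ' →
      Reach U e st σ'

/-- Strongest postcondition of the loop body from guard∧invariant states. -/
def WP (U : StatePred) (e : Expr) (st : Stmt) : TracePred :=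
  fun τ => ∃ σ, (istrue e σ ∧ Reach U e st σ) ∧ Exec st σ τ

def WQ (U : StatePred) (e : Expr) (st : Stmt) : TracePred :=
  Chop (Iter (Chop (WP U e st) (Dup (Reach U e st)))) (Sglt fun σ => ¬ istrue e σ)

lemma while_exec (U : StatePred) (e : Expr) (st : Stmt) :
    ∀ (σ₀ : State) (τ₁ : Trace), τ₁.hd = σ₀ → WQ U e st τ₁ →
      Exec (.whileDo e st) σ₀ (Trace.cons σ₀ τ₁) := by
  intro σ₀ τ₁ hhd hQ
  refine ⟨fun s σ τ => Exec s σ τ ∨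
      (s = .whileDo e st ∧ ∃ τ₂, τ = Trace.cons σ τ₂ ∧ τ₂.hd = σ ∧ WQ U e st τ₂),
    fun s a b => ExecSeq s a b ∨ (s = .whileDo e st ∧ ∃ τa τb,
      Follows (Dup (Reach U e st)) a τa ∧
      Follows (Iter (Chop (WP U e st) (Dup (Reach U e st)))) τa τb ∧
      Follows (Sglt fun σ => ¬ istrue e σ) τb b),
    ?_, Or.inr ⟨rfl, τ₁, rfl, hhd, hQ⟩⟩
  have hC := evalConsistent_exec
  refine ⟨?_, ?_, ?_, ?_, ?_, ?_⟩
  · rintro x e' σ τ (h | ⟨h, -⟩)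
    exacts [hC.1 _ _ _ _ h, Stmt.noConfusion h]
  · rintro σ τ (h | ⟨h, -⟩)
    exacts [hC.2.1 _ _ h, Stmt.noConfusion h]
  · rintro s₀ s₁ σ τ' (h | ⟨h, -⟩)
    · obtain ⟨τ, h1, h2⟩ := hC.2.2.1 _ _ _ _ h
      exact ⟨τ, Or.inl h1, Or.inl h2⟩
    · exact Stmt.noConfusion h
  · rintro e' st' sf σ τ (h | ⟨h, -⟩)
    · rcases hC.2.2.2.1 _ _ _ _ _ h with ⟨h1, h2⟩ | ⟨h1, h2⟩
      exacts [Or.inl ⟨h1, Or.inl h2⟩, Or.inr ⟨h1, Or.inl h2⟩]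
    · exact Stmt.noConfusion h
  · rintro e' st' σ τ (h | ⟨heq, τ₂, rfl, hhd2, hQ2⟩)
    · rcases hC.2.2.2.2.1 _ _ _ _ h with ⟨h1, τ₀, h2, h3⟩ | h1
      exacts [Or.inl ⟨h1, τ₀, Or.inl h2, Or.inl h3⟩, Or.inr h1]
    · obtain ⟨rfl, rfl⟩ : e = e' ∧ st = st' := by cases heq; exact ⟨rfl, rfl⟩
      obtain ⟨τit, hIter, hF⟩ := hQ2
      rcases iter_elim hIter with ⟨σ', rfl⟩ | ⟨τ₀, hR0, hFit⟩
      · obtain ⟨hhd', hSg⟩ := follows_single_elim hF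
        obtain ⟨σ'', hNE, rfl⟩ := hSg
        have hs : σ'' = σ := hhd2
        subst hs
        exact Or.inr ⟨hNE, rfl⟩
      · obtain ⟨τb, ⟨σ', ⟨hEσ', hIσ'⟩, hExb⟩, hFb⟩ := hR0
        have hb : τb.hd = σ' := exec_hd st hExb
        have h1 : τ₀.hd = σ' := (follows_hd hFb).trans hb
        have h2 : τit.hd = σ' := (follows_hd hFit).trans h1
        have h3 : τ₂.hd = σ' := (follows_hd hF).trans h2
        have hσ : σ' = σ := h3.symm.trans hhd2
        subst hσ
        refine Or.inl ⟨hEσ', Trace.cons σ' τb, ?_, ?_⟩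
        · exact Or.inl (ExecSeq.ofES1 (ES1.cons σ' (ExecSeq.ofES1 (ES1.single hExb))))
        · exact Or.inr ⟨rfl, Trace.cons σ' τ₀, Trace.cons σ' τit,
            follows_cons_intro hFb, follows_cons_intro hFit, follows_cons_intro hF⟩
  · rintro s a b (h | ⟨rfl, τa, τb, hFa, hFit, hFb⟩)
    · rcases hC.2.2.2.2.2 _ _ _ h with ⟨σ, h1, h2⟩ | ⟨σ, t0, t1, h1, h2, h3⟩
      exacts [Or.inl ⟨σ, h1, Or.inl h2⟩, Or.inr ⟨σ, t0, t1, h1, h2, Or.inl h3⟩]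
    · rcases trace_cases a with ⟨σ, rfl⟩ | ⟨σ, a', rfl⟩
      · obtain ⟨hhda, hDup⟩ := follows_single_elim hFa
        obtain ⟨σ', hI, rfl⟩ := hDup
        have hs : σ' = σ := hhda
        subst hs
        obtain ⟨τb', rfl, hFit'⟩ := follows_cons_elim hFit
        obtain ⟨hbd', hIt'⟩ := follows_single_elim hFit'
        obtain ⟨b', rfl, hFb'⟩ := follows_cons_elim hFb
        refine Or.inl ⟨σ', rfl, Or.inr ⟨rfl, b', rfl, ?_, τb', hIt', hFb'⟩⟩
        exact (follows_hd hFb').trans hbd'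
      · obtain ⟨τa', rfl, hFa'⟩ := follows_cons_elim hFa
        obtain ⟨τb', rfl, hFit'⟩ := follows_cons_elim hFit
        obtain ⟨b', rfl, hFb'⟩ := follows_cons_elim hFb
        exact Or.inr ⟨σ, a', b', rfl, rfl, Or.inr ⟨rfl, τa', τb', hFa', hFit', hFb'⟩⟩

/- ======== strongest postcondition is derivable ======== -/

lemma sp_derivable : ∀ (s : Stmt) (U : StatePred),
    THoare U s (fun τ => ∃ σ, U σ ∧ Exec s σ τ) := by
  intro s
  induction s with
  | assign x e =>
    intro U
    refine THoare.conseq (fun σ h => h) (THoare.assign U x e) ?_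
    rintro τ ⟨σ, hU, rfl⟩
    exact ⟨σ, hU, Exec.ofE1 (E1.assign x e σ)⟩
  | skip =>
    intro U
    refine THoare.conseq (fun σ h => h) (THoare.skip U) ?_
    rintro τ ⟨σ, hU, rfl⟩
    exact ⟨σ, hU, Exec.ofE1 (E1.skip σ)⟩
  | seq s₀ s₁ ih₀ ih₁ =>
    intro U
    have h₀ : THoare U s₀
        (Chop (fun τ => ∃ σ, U σ ∧ Exec s₀ σ τ)
          (Sglt (Last (fun τ => ∃ σ, U σ ∧ Exec s₀ σ τ)))) :=
      THoare.conseq (fun _ h => h) (ih₀ U)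
        (fun τ hτ => chop_extend (fun τ σ hP hc => ⟨τ, hP, hc⟩) hτ)
    refine THoare.conseq (fun σ h => h)
      (THoare.seq h₀ (ih₁ (Last (fun τ => ∃ σ, U σ ∧ Exec s₀ σ τ)))) ?_
    rintro τ' ⟨τ, ⟨σ, hU, hEx⟩, hF⟩
    refine ⟨σ, hU, Exec.ofE1 (E1.seq hEx (follows_execSeq ?_ hF))⟩
    rintro b ⟨σ', _, hEx'⟩
    rwa [exec_hd s₁ hEx']
  | ifte e st sf iht ihf =>
    intro U
    have hT : THoare (fun σ => istrue e σ ∧ U σ) st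
        (fun τ => (∃ σ, (istrue e σ ∧ U σ) ∧ Exec st σ τ) ∨
          (∃ σ, (¬ istrue e σ ∧ U σ) ∧ Exec sf σ τ)) :=
      THoare.conseq (fun _ h => h) (iht _) (fun τ h => Or.inl h)
    have hF : THoare (fun σ => ¬ istrue e σ ∧ U σ) sf
        (fun τ => (∃ σ, (istrue e σ ∧ U σ) ∧ Exec st σ τ) ∨
          (∃ σ, (¬ istrue e σ ∧ U σ) ∧ Exec sf σ τ)) :=
      THoare.conseq (fun _ h => h) (ihf _) (fun τ h => Or.inr h)
    refine THoare.conseq (fun σ h => h) (THoare.ifte hT hF) ?_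
    rintro τ' ⟨τ, ⟨σ, hU, rfl⟩, hFol⟩
    obtain ⟨b, rfl, hFol'⟩ := follows_cons_elim hFol
    obtain ⟨hbd, hQ⟩ := follows_single_elim hFol'
    rcases hQ with ⟨σ', ⟨he, hU'⟩, hEx⟩ | ⟨σ', ⟨he, hU'⟩, hEx⟩
    · have hs : σ' = σ := (exec_hd st hEx).symm.trans hbd
      subst hs
      exact ⟨σ', hU', Exec.ofE1 (E1.ifT he
        (ExecSeq.ofES1 (ES1.cons σ' (ExecSeq.ofES1 (ES1.single hEx)))))⟩
    · have hs : σ' = σ := (exec_hd sf hEx).symm.trans hbd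
      subst hs
      exact ⟨σ', hU', Exec.ofE1 (E1.ifF he
        (ExecSeq.ofES1 (ES1.cons σ' (ExecSeq.ofES1 (ES1.single hEx)))))⟩
  | whileDo e st ih =>
    intro U
    have hUI : ∀ σ, U σ → Reach U e st σ := fun σ h => Reach.base h
    have hbody : THoare (fun σ => istrue e σ ∧ Reach U e st σ) st
        (Chop (WP U e st) (Sglt (Reach U e st))) :=
      THoare.conseq (fun _ h => h) (ih _)
        (fun τ hτ => chop_extend (fun τ σ' hP hc => by
          obtain ⟨σ'', ⟨he, hI⟩, hEx⟩ := hP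
          exact Reach.step hI he hEx hc) hτ)
    refine THoare.conseq (fun σ h => h) (THoare.whileDo hUI hbody) ?_
    rintro τ' ⟨τ, ⟨σ, hU, rfl⟩, hFol⟩
    obtain ⟨τ₁, rfl, hFol'⟩ := follows_cons_elim hFol
    obtain ⟨hhd, hQ⟩ := follows_single_elim hFol'
    exact ⟨σ, hU, while_exec U e st σ τ₁ hhd hQ⟩

/-- Completeness of the trace-based Hoare logic. -/
theorem tHoare_complete (s : Stmt) (U : StatePred) (P : TracePred)
    (hP : IsSetoidPred P)
    (h : ∀ (σ : State) (τ : Trace), U σ → Exec s σ τ → P τ) :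
    THoare U s P := by
  refine THoare.conseq (fun σ h => h) (sp_derivable s U) ?_
  rintro τ ⟨σ, hU, hEx⟩
  exact h σ τ hU hEx

end WhileTrace
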